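/- Let n be a natural number, δ > 0, real numbers ε₁, ε₂ with 0 < 2ε₁ < ε₂ < 2δ, a ∈ ℝ, and λ₁, λ₂, λ₃ ∈ [0, 1] with λ = max(λ₁, λ₂, λ₃). Let S ⊆ (Fin n → ℝ) be a measurable set (the acceptance region of the test with three errors) such that: (i) vol(S ∩ Box(a)) > (1 − λ₁)·(2δ)^n (the test accepts at the root a with probability > 1 − λ₁); (ii) vol(Sᶜ ∩ Box(a − ε₂)) > (1 − λ₂)·(2δ)^n (the test rejects at a − ε₂ with probability > 1 − λ₂); (iii) vol(S ∩ Box(a − ε₂ + ε₁)) > (1 − λ₃)·(2δ)^n (the test accepts at a − ε₂ + ε₁ with probability > 1 − λ₃); and (iv) vol(Sᶜ ∩ Box(a − ε₁)) > (1 − λ₃)·(2δ)^n (the test rejects at a − ε₁ with probability > 1 − λ₃). Then 6λ·(2δ)^n ≥ 2·(2δ − ε₁)^n + (2δ − ε₂)^n, equivalently 6λ ≥ 2·(1 − ε₁/(2δ))^n + (1 − ε₂/(2δ))^n. -/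

import Mathlib

open MeasureTheory

lemma vol_box (n : ℕ) (l u : ℝ) :
    volume {y : Fin n → ℝ | ∀ i, y i ∈ Set.Icc l u} = ENNReal.ofReal (u - l) ^ n := by
  have : {y : Fin n → ℝ | ∀ i, y i ∈ Set.Icc l u} =
      Set.pi Set.univ (fun _ : Fin n => Set.Icc l u) := by
    ext y; simp [Set.mem_pi, Set.mem_Icc, Pi.le_def, forall_and]
  rw [this, volume_pi_pi]
  simp [Real.volume_Icc]

lemma key (n : ℕ) (δ : ℝ) (hδ : 0 < δ) (c₁ c₂ : ℝ) (hc : c₂ ≤ c₁)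
    (hc2 : c₁ - c₂ ≤ 2 * δ) (la lb : ℝ)
    (hla : la ∈ Set.Icc (0:ℝ) 1) (hlb : lb ∈ Set.Icc (0:ℝ) 1)
    (S : Set (Fin n → ℝ)) (hS : MeasurableSet S)
    (hA : ENNReal.ofReal ((1 - la) * (2 * δ) ^ n) <
      volume (S ∩ {y : Fin n → ℝ | ∀ i, y i ∈ Set.Icc (c₁ - δ) (c₁ + δ)}))
    (hB : ENNReal.ofReal ((1 - lb) * (2 * δ) ^ n) <
      volume (Sᶜ ∩ {y : Fin n → ℝ | ∀ i, y i ∈ Set.Icc (c₂ - δ) (c₂ + δ)})) :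
    (2 * δ - (c₁ - c₂)) ^ n ≤ (la + lb) * (2 * δ) ^ n := by
  set B₁ : Set (Fin n → ℝ) := {y | ∀ i, y i ∈ Set.Icc (c₁ - δ) (c₁ + δ)} with hB₁def
  set B₂ : Set (Fin n → ℝ) := {y | ∀ i, y i ∈ Set.Icc (c₂ - δ) (c₂ + δ)} with hB₂def
  have hV : (0:ℝ) ≤ (2 * δ) ^ n := by positivity
  have hVle : (0:ℝ) ≤ (2 * δ - (c₁ - c₂)) := by linarith
  have hvolB₁ : volume B₁ = ENNReal.ofReal ((2*δ)^n) := by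
    rw [hB₁def, vol_box, ← ENNReal.ofReal_pow (by linarith)]
    congr 1; ring
  have hvolB₂ : volume B₂ = ENNReal.ofReal ((2*δ)^n) := by
    rw [hB₂def, vol_box, ← ENNReal.ofReal_pow (by linarith)]
    congr 1; ring
  have hIsub : B₁ ∩ B₂ = {y : Fin n → ℝ | ∀ i, y i ∈ Set.Icc (c₁ - δ) (c₂ + δ)} := by
    ext y
    simp only [hB₁def, hB₂def, Set.mem_inter_iff, Set.mem_setOf_eq, Set.mem_Icc]
    constructor
    · rintro ⟨h1, h2⟩ i; exact ⟨(h1 i).1, (h2 i).2⟩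
    · intro h; exact ⟨fun i => ⟨(h i).1, by linarith [(h i).2]⟩,
        fun i => ⟨by linarith [(h i).1], (h i).2⟩⟩
  have hvolI : volume (B₁ ∩ B₂) = ENNReal.ofReal ((2 * δ - (c₁ - c₂)) ^ n) := by
    have hVle2 : (0:ℝ) ≤ c₂ + δ - (c₁ - δ) := by linarith
    rw [hIsub, vol_box, ← ENNReal.ofReal_pow hVle2]
    congr 1; ring
  have hcomp : ∀ (T B : Set (Fin n → ℝ)) (l : ℝ), MeasurableSet T → l ∈ Set.Icc (0:ℝ) 1 →
      volume B = ENNReal.ofReal ((2*δ)^n) →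
      ENNReal.ofReal ((1 - l) * (2 * δ) ^ n) < volume (T ∩ B) →
      volume (Tᶜ ∩ B) ≤ ENNReal.ofReal (l * (2*δ)^n) := by
    intro T B l hT hl hvB h
    have hsplit : volume (T ∩ B) + volume (Tᶜ ∩ B) = volume B := by
      rw [Set.inter_comm T B, Set.inter_comm Tᶜ B, ← Set.diff_eq]
      exact measure_inter_add_diff B hT
    have h1 : volume (Tᶜ ∩ B) + ENNReal.ofReal ((1 - l) * (2 * δ) ^ n)
        ≤ ENNReal.ofReal ((2*δ)^n) := by
      rw [← hvB, ← hsplit, add_comm (volume (T ∩ B))]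
      exact add_le_add le_rfl h.le
    have h2 := ENNReal.le_sub_of_add_le_right (by simp) h1
    calc volume (Tᶜ ∩ B)
        ≤ ENNReal.ofReal ((2*δ)^n) - ENNReal.ofReal ((1 - l) * (2 * δ) ^ n) := h2
      _ = ENNReal.ofReal ((2*δ)^n - (1 - l) * (2 * δ) ^ n) := by
          rw [ENNReal.ofReal_sub]
          exact mul_nonneg (by linarith [hl.2]) hV
      _ = ENNReal.ofReal (l * (2*δ)^n) := by congr 1; ring
  have hAc : volume (Sᶜ ∩ B₁) ≤ ENNReal.ofReal (la * (2*δ)^n) :=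
    hcomp S B₁ la hS hla hvolB₁ hA
  have hBc : volume (S ∩ B₂) ≤ ENNReal.ofReal (lb * (2*δ)^n) := by
    have := hcomp Sᶜ B₂ lb hS.compl hlb hvolB₂ hB
    rwa [compl_compl] at this
  have hsub : B₁ ∩ B₂ ⊆ (S ∩ B₂) ∪ (Sᶜ ∩ B₁) := by
    rintro y ⟨hy1, hy2⟩
    by_cases h : y ∈ S
    · exact Or.inl ⟨h, hy2⟩
    · exact Or.inr ⟨h, hy1⟩
  have hfinal : ENNReal.ofReal ((2 * δ - (c₁ - c₂)) ^ n)
      ≤ ENNReal.ofReal ((la + lb) * (2*δ)^n) := by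
    calc ENNReal.ofReal ((2 * δ - (c₁ - c₂)) ^ n) = volume (B₁ ∩ B₂) := hvolI.symm
      _ ≤ volume ((S ∩ B₂) ∪ (Sᶜ ∩ B₁)) := measure_mono hsub
      _ ≤ volume (S ∩ B₂) + volume (Sᶜ ∩ B₁) := measure_union_le _ _
      _ ≤ ENNReal.ofReal (lb * (2*δ)^n) + ENNReal.ofReal (la * (2*δ)^n) :=
          add_le_add hBc hAc
      _ = ENNReal.ofReal ((la + lb) * (2*δ)^n) := by
          rw [← ENNReal.ofReal_add (mul_nonneg hlb.1 hV) (mul_nonneg hla.1 hV)]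
          congr 1; ring
  rwa [ENNReal.ofReal_le_ofReal_iff
    (mul_nonneg (add_nonneg hla.1 hlb.1) hV)] at hfinal

theorem three_error_test_bound (n : ℕ) (δ ε₁ ε₂ : ℝ) (hδ : 0 < δ)
    (hε₁ : 0 < 2 * ε₁) (hε₁₂ : 2 * ε₁ < ε₂) (hε₂ : ε₂ < 2 * δ) (a : ℝ)
    (lam₁ lam₂ lam₃ : ℝ) (hlam₁ : lam₁ ∈ Set.Icc (0 : ℝ) 1)
    (hlam₂ : lam₂ ∈ Set.Icc (0 : ℝ) 1) (hlam₃ : lam₃ ∈ Set.Icc (0 : ℝ) 1)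
    (S : Set (Fin n → ℝ)) (hS : MeasurableSet S)
    (h₁ : ENNReal.ofReal ((1 - lam₁) * (2 * δ) ^ n) <
      MeasureTheory.volume (S ∩ {y : Fin n → ℝ | ∀ i, y i ∈ Set.Icc (a - δ) (a + δ)}))
    (h₂ : ENNReal.ofReal ((1 - lam₂) * (2 * δ) ^ n) <
      MeasureTheory.volume
        (Sᶜ ∩ {y : Fin n → ℝ | ∀ i, y i ∈ Set.Icc (a - ε₂ - δ) (a - ε₂ + δ)}))
    (h₃ : ENNReal.ofReal ((1 - lam₃) * (2 * δ) ^ n) <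
      MeasureTheory.volume
        (S ∩ {y : Fin n → ℝ | ∀ i, y i ∈ Set.Icc (a - ε₂ + ε₁ - δ) (a - ε₂ + ε₁ + δ)}))
    (h₄ : ENNReal.ofReal ((1 - lam₃) * (2 * δ) ^ n) <
      MeasureTheory.volume
        (Sᶜ ∩ {y : Fin n → ℝ | ∀ i, y i ∈ Set.Icc (a - ε₁ - δ) (a - ε₁ + δ)})) :
    2 * (2 * δ - ε₁) ^ n + (2 * δ - ε₂) ^ n ≤
      6 * max lam₁ (max lam₂ lam₃) * (2 * δ) ^ n := by
  have k1 := key n δ hδ a (a - ε₁) (by linarith) (by linarith) lam₁ lam₃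
    hlam₁ hlam₃ S hS h₁ h₄
  have k2 := key n δ hδ (a - ε₂ + ε₁) (a - ε₂) (by linarith) (by linarith) lam₃ lam₂
    hlam₃ hlam₂ S hS h₃ h₂
  have k3 := key n δ hδ a (a - ε₂) (by linarith) (by linarith) lam₁ lam₂
    hlam₁ hlam₂ S hS h₁ h₂
  have e1 : a - (a - ε₁) = ε₁ := by ring
  have e2 : a - ε₂ + ε₁ - (a - ε₂) = ε₁ := by ring
  have e3 : a - (a - ε₂) = ε₂ := by ring
  rw [e1] at k1; rw [e2] at k2; rw [e3] at k3
  have hV : (0:ℝ) ≤ (2 * δ) ^ n := by positivity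
  have m1 : lam₁ ≤ max lam₁ (max lam₂ lam₃) := le_max_left _ _
  have m2 : lam₂ ≤ max lam₁ (max lam₂ lam₃) := le_trans (le_max_left _ _) (le_max_right _ _)
  have m3 : lam₃ ≤ max lam₁ (max lam₂ lam₃) := le_trans (le_max_right _ _) (le_max_right _ _)
  nlinarith [mul_nonneg (sub_nonneg.mpr m1) hV, mul_nonneg (sub_nonneg.mpr m2) hV,
    mul_nonneg (sub_nonneg.mpr m3) hV]
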